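/- arXiv:2103.15772 — 2 statements merged into one kernel-verified Lean document; each statement's English description precedes it below -/
import Mathlib

section
/- Let C be a k-linear category with finite-dimensional hom spaces equipped with a cyclic nondegenerate trace (t_P)_P. The degree-zero product is commutative after applying the trace: for all objects P, Q and all h ∈ Hom(P,P), h' ∈ Hom(Q,Q), and any choices of dual bases used in forming the products, one has t_P(h ⋆ h') = t_Q(h' ⋆ h). -/
open CategoryTheory

/-- The degree-zero product is commutative after applying the trace:
`t_P (h ⋆ h') = t_Q (h' ⋆ h)` for any choices of dual bases used to form the two products
(`h ⋆ h' = ∑ i, h ∘ g i ∘ h' ∘ f i` with `f, g` dual bases of `Hom(P,Q)`, `Hom(Q,P)` relative to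
`t_P`, and `h' ⋆ h = ∑ j, h' ∘ g' j ∘ h ∘ f' j` with `f', g'` dual bases of `Hom(Q,P)`,
`Hom(P,Q)` relative to `t_Q`; empty index types cover the case `Hom(P,Q) = 0`). -/
theorem trace_star_comm
    {k : Type*} [Field k] {C : Type*} [Category C] [Preadditive C] [CategoryTheory.Linear k C]
    [∀ X Y : C, FiniteDimensional k (X ⟶ Y)]
    (t : ∀ P : C, (P ⟶ P) →ₗ[k] k)
    (cyc : ∀ {P Q : C} (f : P ⟶ Q) (g : Q ⟶ P), t P (f ≫ g) = t Q (g ≫ f))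
    (nondeg₁ : ∀ {P Q : C} (f : P ⟶ Q), (∀ g : Q ⟶ P, t P (f ≫ g) = 0) → f = 0)
    (nondeg₂ : ∀ {P Q : C} (g : Q ⟶ P), (∀ f : P ⟶ Q, t P (f ≫ g) = 0) → g = 0)
    {P Q : C} {ι κ : Type*} [Fintype ι] [DecidableEq ι] [Fintype κ] [DecidableEq κ]
    (f : Module.Basis ι k (P ⟶ Q)) (g : Module.Basis ι k (Q ⟶ P))
    (dual : ∀ i j, t P (f i ≫ g j) = if i = j then 1 else 0)
    (f' : Module.Basis κ k (Q ⟶ P)) (g' : Module.Basis κ k (P ⟶ Q))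
    (dual' : ∀ i j, t Q (f' i ≫ g' j) = if i = j then 1 else 0)
    (h : P ⟶ P) (h' : Q ⟶ Q) :
    t P (∑ i, f i ≫ h' ≫ g i ≫ h) = t Q (∑ j, f' j ≫ h ≫ g' j ≫ h') := by

  -- Expansion of any `v : P ⟶ Q` in the basis `g'`, and of any `u : Q ⟶ P` in the basis `g`.
  have coeff₁ : ∀ (v : P ⟶ Q) (j : κ), t Q (f' j ≫ v) = g'.repr v j := by
    intro v j
    conv_lhs => rw [← g'.sum_repr v]
    rw [Preadditive.comp_sum]
    simp only [Linear.comp_smul, map_sum, map_smul, dual', smul_eq_mul,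
      mul_ite, mul_one, mul_zero]
    simp
  have coeff₂ : ∀ (u : Q ⟶ P) (i : ι), t P (f i ≫ u) = g.repr u i := by
    intro u i
    conv_lhs => rw [← g.sum_repr u]
    rw [Preadditive.comp_sum]
    simp only [Linear.comp_smul, map_sum, map_smul, dual, smul_eq_mul,
      mul_ite, mul_one, mul_zero]
    simp
  have expand₁ : ∀ v : P ⟶ Q, v = ∑ j, t Q (f' j ≫ v) • g' j := by
    intro v
    simp only [coeff₁]
    exact (g'.sum_repr v).symm
  have expand₂ : ∀ u : Q ⟶ P, u = ∑ i, t P (f i ≫ u) • g i := by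
    intro u
    simp only [coeff₂]
    exact (g.sum_repr u).symm
  have lhs : t P (∑ i, f i ≫ h' ≫ g i ≫ h)
      = ∑ i, ∑ j, t Q (f' j ≫ f i) * t P (g' j ≫ h' ≫ g i ≫ h) := by
    rw [map_sum]
    refine Finset.sum_congr rfl fun i _ => ?_
    conv_lhs => rw [expand₁ (f i)]
    rw [Preadditive.sum_comp]
    simp only [Linear.smul_comp, map_sum, map_smul, smul_eq_mul]
  have rhs : t Q (∑ j, f' j ≫ h ≫ g' j ≫ h')
      = ∑ j, ∑ i, t P (f i ≫ f' j) * t Q (g i ≫ h ≫ g' j ≫ h') := by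
    rw [map_sum]
    refine Finset.sum_congr rfl fun j _ => ?_
    conv_lhs => rw [expand₂ (f' j)]
    rw [Preadditive.sum_comp]
    simp only [Linear.smul_comp, map_sum, map_smul, smul_eq_mul]
  rw [lhs, rhs, Finset.sum_comm]
  refine Finset.sum_congr rfl fun j _ => Finset.sum_congr rfl fun i _ => ?_
  have e1 : t Q (f' j ≫ f i) = t P (f i ≫ f' j) := (cyc (f i) (f' j)).symm
  have e2 : t P (g' j ≫ h' ≫ g i ≫ h) = t Q (g i ≫ h ≫ g' j ≫ h') := by
    have := cyc (g' j ≫ h') (g i ≫ h)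
    simpa [Category.assoc] using this
  rw [e1, e2]
end

section
/- Let C be a k-linear category with finite-dimensional hom spaces equipped with a cyclic nondegenerate trace (t_P)_P. For objects P, Q and any h ∈ Hom(P,P), both h∘ξ_{P,Q} and ξ_{P,Q}∘h are equal to the double sum Σ_{i,j} t_P(h∘g_i∘f_j) · (g_j∘f_i), where (f_i) and (g_i) are dual bases of Hom(P,Q) and Hom(Q,P). -/
open CategoryTheory

/-- For dual bases `(f i)` of `Hom(P,Q)` and `(g i)` of `Hom(Q,P)` with respect
to a cyclic nondegenerate trace, and any `h : P ⟶ P`, both `h ∘ ξ_{P,Q}` and `ξ_{P,Q} ∘ h`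
(where `ξ_{P,Q} = ∑ i, g i ∘ f i` is the handle element) are equal to the double sum
`∑ i j, t_P (h ∘ g i ∘ f j) • (g j ∘ f i)`. -/
theorem handle_element_conjugation_formula
    {k : Type*} [Field k] {C : Type*} [Category C] [Preadditive C] [CategoryTheory.Linear k C]
    [∀ X Y : C, FiniteDimensional k (X ⟶ Y)]
    (t : ∀ P : C, (P ⟶ P) →ₗ[k] k)
    (cyc : ∀ {P Q : C} (f : P ⟶ Q) (g : Q ⟶ P), t P (f ≫ g) = t Q (g ≫ f))
    (nondeg₁ : ∀ {P Q : C} (f : P ⟶ Q), (∀ g : Q ⟶ P, t P (f ≫ g) = 0) → f = 0)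
    (nondeg₂ : ∀ {P Q : C} (g : Q ⟶ P), (∀ f : P ⟶ Q, t P (f ≫ g) = 0) → g = 0)
    {P Q : C} {ι : Type*} [Fintype ι] [DecidableEq ι]
    (f : Module.Basis ι k (P ⟶ Q)) (g : Module.Basis ι k (Q ⟶ P))
    (dual : ∀ i j, t P (f i ≫ g j) = if i = j then 1 else 0)
    (h : P ⟶ P) :
    (∑ i, f i ≫ g i) ≫ h = (∑ i, ∑ j, t P (f j ≫ g i ≫ h) • (f i ≫ g j)) ∧
    h ≫ (∑ i, f i ≫ g i) = (∑ i, ∑ j, t P (f j ≫ g i ≫ h) • (f i ≫ g j)) := by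
  have keyb : ∀ b : Q ⟶ P, b = ∑ j, t P (f j ≫ b) • g j := by
    intro b
    have hrep : ∀ j, t P (f j ≫ b) = g.repr b j := by
      intro j
      conv_lhs => rw [← g.sum_repr b]
      rw [Preadditive.comp_sum, map_sum]
      simp [Linear.comp_smul, dual]
    simp_rw [hrep]
    exact (g.sum_repr b).symm
  have keya : ∀ a : P ⟶ Q, a = ∑ j, t P (a ≫ g j) • f j := by
    intro a
    have hrep : ∀ j, t P (a ≫ g j) = f.repr a j := by
      intro j
      conv_lhs => rw [← f.sum_repr a]
      rw [Preadditive.sum_comp, map_sum]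
      simp [Linear.smul_comp, dual]
    simp_rw [hrep]
    exact (f.sum_repr a).symm
  constructor
  · rw [Preadditive.sum_comp]
    refine Finset.sum_congr rfl fun i _ => ?_
    rw [Category.assoc]
    conv_lhs => rw [keyb (g i ≫ h), Preadditive.comp_sum]
    simp [Linear.comp_smul]
  · rw [Preadditive.comp_sum]
    have : ∀ i, h ≫ (f i ≫ g i) = ∑ j, t P (f i ≫ g j ≫ h) • (f j ≫ g i) := by
      intro i
      rw [← Category.assoc, keya (h ≫ f i), Preadditive.sum_comp]
      refine Finset.sum_congr rfl fun j _ => ?_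
      rw [Linear.smul_comp]
      congr 1
      rw [Category.assoc, cyc h (f i ≫ g j), Category.assoc]
    simp_rw [this]
    rw [Finset.sum_comm]
end
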